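/- Let m ≥ 2 be an integer and k > 0 a real number with (m−2)² + 8k ≠ 4, and set k₁ = (−(m−2)+√((m−2)²+8k))/2 and k₂ = (−(m−2)−√((m−2)²+8k))/2. A four-times-differentiable function ρ : (0,∞) → ℝ satisfies the fourth-order system F''(r) + (m−1)F'(r)/r − 2k F(r)/r² = 0 for all r > 0, where F(r) := ρ''(r) + (m−1)ρ'(r)/r − 2k ρ(r)/r², if and only if there exist constants c₁, c₂, c₃, c₄ ∈ ℝ such that ρ(r) = c₁/(2(m+2k₁)) · r^{k₁+2} + c₂/(2(m+2k₂)) · r^{k₂+2} + c₃ r^{k₁} + c₄ r^{k₂} for all r > 0. -/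

import Mathlib

open Set Filter

private lemma constOnIoi (G : ℝ → ℝ) (hG : ∀ r ∈ Set.Ioi (0:ℝ), HasDerivAt G 0 r) :
    ∀ r ∈ Set.Ioi (0:ℝ), G r = G 1 := by
  intro r hr
  refine (convex_Ioi (0:ℝ)).is_const_of_fderivWithin_eq_zero (𝕜 := ℝ)
    (fun x hx => ((hG x hx).differentiableAt).differentiableWithinAt) (fun x hx => ?_) hr
    (by norm_num)
  rw [fderivWithin_of_isOpen isOpen_Ioi hx, (hG x hx).hasFDerivAt.fderiv]
  ext y
  simp

private lemma hasDerivAt_term (a p q : ℝ) (hq : q = p - 1) {r : ℝ} (hr : 0 < r) :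
    HasDerivAt (fun x : ℝ => a * x ^ p) (a * p * r ^ q) r := by
  subst hq
  have := (Real.hasDerivAt_rpow_const (x := r) (p := p) (Or.inl hr.ne')).const_mul a
  convert this using 1
  · rfl
  · rfl
  ring

private lemma solve1 (c : ℝ) (g g' h H : ℝ → ℝ)
    (hg : ∀ r ∈ Set.Ioi (0:ℝ), HasDerivAt g (g' r) r)
    (hH : ∀ r ∈ Set.Ioi (0:ℝ), HasDerivAt H (h r * r ^ (-c-1)) r)
    (heq : ∀ r ∈ Set.Ioi (0:ℝ), r * g' r - c * g r = h r) :
    ∃ C : ℝ, ∀ r ∈ Set.Ioi (0:ℝ), g r = (H r + C) * r ^ c := by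
  have hG : ∀ r ∈ Set.Ioi (0:ℝ), HasDerivAt (fun x => g x * x ^ (-c) - H x) 0 r := by
    intro r hr
    have hr0 : (r:ℝ) ≠ 0 := ne_of_gt hr
    have h1 : HasDerivAt (fun x : ℝ => x ^ (-c)) (-c * r ^ (-c-1)) r :=
      Real.hasDerivAt_rpow_const (Or.inl hr0)
    have h2 := ((hg r hr).mul h1).sub (hH r hr)
    convert h2 using 1
    · rfl
    · rfl
    · rfl
    have e1 : r ^ (-c) = r ^ (-c-1) * r := by
      rw [← Real.rpow_add_one hr0]; ring_nf
    have e2 := heq r hr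
    linear_combination (-(g' r)) * e1 + (-(r ^ (-c-1))) * e2
  have hc := constOnIoi _ hG
  refine ⟨g 1 * 1 ^ (-c) - H 1, fun r hr => ?_⟩
  have h3 := hc r hr
  have hrc : (0:ℝ) < r ^ c := Real.rpow_pos_of_pos hr c
  have hneg : r ^ (-c) = (r ^ c)⁻¹ := Real.rpow_neg (le_of_lt hr) c
  rw [hneg] at h3
  field_simp at h3
  simp only [Real.one_rpow, mul_one]
  linear_combination h3 + r ^ c * g 1 * Real.one_rpow (-c)

private lemma L_rpow (M K p c pm1 pm2 : ℝ) {r : ℝ} (hr : 0 < r)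
    (h1 : pm1 = p - 1) (h2 : pm2 = p - 2)
    (hc : p ^ 2 + (M - 2) * p - 2 * K = c) :
    p * (p - 1) * r ^ pm2 + (M - 1) * (p * r ^ pm1) / r - 2 * K * r ^ p / r ^ 2
      = c * r ^ pm2 := by
  have hr0 : r ≠ 0 := ne_of_gt hr
  have e1 : r ^ pm1 = r ^ pm2 * r := by
    rw [h1, h2, ← Real.rpow_add_one hr0]; ring_nf
  have e2 : r ^ p = r ^ pm2 * r ^ 2 := by
    rw [h2, show r ^ (2:ℕ) = r ^ ((2:ℕ):ℝ) from (Real.rpow_natCast r 2).symm,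
      ← Real.rpow_add hr]
    norm_num
  rw [e1, e2]
  field_simp
  linear_combination hc

private lemma rpow_mul_rpow {r : ℝ} (hr : 0 < r) (p q u : ℝ) (h : u = p + q) :
    r ^ p * r ^ q = r ^ u := by
  rw [h, Real.rpow_add hr]

private lemma rpow_mul_sq {r : ℝ} (hr : 0 < r) (p u : ℝ) (h : u = p + 2) :
    r ^ p * r ^ (2:ℕ) = r ^ u := by
  rw [show r ^ (2:ℕ) = r ^ ((2:ℕ):ℝ) from (Real.rpow_natCast r 2).symm,
    ← Real.rpow_add hr, h]
  norm_num

/- STATEMENT 1: generic case of the equivariant biharmonic ODE on (0,∞):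
F'' + (m−1)F'/r − 2kF/r² = 0 with F = ρ'' + (m−1)ρ'/r − 2kρ/r², assuming
(m−2)² + 8k ≠ 4, holds iff
ρ(r) = c₁/(2(m+2k₁)) r^{k₁+2} + c₂/(2(m+2k₂)) r^{k₂+2} + c₃ r^{k₁} + c₄ r^{k₂}. -/
theorem stmt_1 (m : ℕ) (hm : 2 ≤ m) (k : ℝ) (hk : 0 < k)
    (hres : ((m : ℝ) - 2) ^ 2 + 8 * k ≠ 4)
    (k₁ k₂ : ℝ)
    (hk₁ : k₁ = (-((m : ℝ) - 2) + Real.sqrt (((m : ℝ) - 2) ^ 2 + 8 * k)) / 2)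
    (hk₂ : k₂ = (-((m : ℝ) - 2) - Real.sqrt (((m : ℝ) - 2) ^ 2 + 8 * k)) / 2)
    (ρ : ℝ → ℝ)
    (hρ : ∀ r : ℝ, 0 < r → ContDiffAt ℝ 4 ρ r)
    (F : ℝ → ℝ)
    (hF : ∀ r : ℝ, 0 < r →
      F r = deriv (deriv ρ) r + ((m : ℝ) - 1) * deriv ρ r / r - 2 * k * ρ r / r ^ 2) :
    (∀ r : ℝ, 0 < r →
        deriv (deriv F) r + ((m : ℝ) - 1) * deriv F r / r - 2 * k * F r / r ^ 2 = 0) ↔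
    (∃ c₁ c₂ c₃ c₄ : ℝ, ∀ r : ℝ, 0 < r →
        ρ r = c₁ / (2 * ((m : ℝ) + 2 * k₁)) * r ^ (k₁ + 2)
          + c₂ / (2 * ((m : ℝ) + 2 * k₂)) * r ^ (k₂ + 2)
          + c₃ * r ^ k₁ + c₄ * r ^ k₂) := by
  -- scalar preliminaries
  set s := Real.sqrt (((m : ℝ) - 2) ^ 2 + 8 * k) with hs_def
  have hdpos : 0 < ((m : ℝ) - 2) ^ 2 + 8 * k := by positivity
  have hs2 : s ^ 2 = ((m : ℝ) - 2) ^ 2 + 8 * k := Real.sq_sqrt hdpos.le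
  have hs0 : 0 < s := Real.sqrt_pos.mpr hdpos
  have hsum : k₁ + k₂ = 2 - (m : ℝ) := by rw [hk₁, hk₂]; ring
  have hdiff : k₁ - k₂ = s := by rw [hk₁, hk₂]; ring
  have hprod : k₁ * k₂ = -(2 * k) := by rw [hk₁, hk₂]; linear_combination -hs2 / 4
  have hne : k₁ - k₂ ≠ 0 := by rw [hdiff]; exact hs0.ne'
  have hsne2 : s ≠ 2 := by
    intro h
    exact hres (by rw [← hs2, h]; norm_num)
  have q₁ : k₁ ^ 2 + ((m : ℝ) - 2) * k₁ - 2 * k = 0 := by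
    rw [hk₁]; linear_combination hs2 / 4
  have q₂ : k₂ ^ 2 + ((m : ℝ) - 2) * k₂ - 2 * k = 0 := by
    rw [hk₂]; linear_combination hs2 / 4
  have hm1 : (m : ℝ) + 2 * k₁ = k₁ - k₂ + 2 := by linarith [hsum]
  have hm2 : (m : ℝ) + 2 * k₂ = k₂ - k₁ + 2 := by linarith [hsum]
  have hk12 : k₁ - k₂ + 2 ≠ 0 := by rw [hdiff]; intro h; linarith
  have hk21 : k₂ - k₁ + 2 ≠ 0 := by
    intro h
    exact hsne2 (by linarith [hdiff])
  have hm1ne : (m : ℝ) + 2 * k₁ ≠ 0 := by rw [hm1]; exact hk12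
  have hm2ne : (m : ℝ) + 2 * k₂ ≠ 0 := by rw [hm2]; exact hk21
  -- differentiability infrastructure for ρ
  have hCO : ContDiffOn ℝ 4 ρ (Ioi 0) := fun r hr => (hρ r hr).contDiffWithinAt
  have hCO1 : ContDiffOn ℝ 3 (deriv ρ) (Ioi 0) :=
    hCO.deriv_of_isOpen isOpen_Ioi (by norm_num)
  have hCO2 : ContDiffOn ℝ 2 (deriv (deriv ρ)) (Ioi 0) :=
    hCO1.deriv_of_isOpen isOpen_Ioi (by norm_num)
  have hρd : ∀ r ∈ Ioi (0:ℝ), HasDerivAt ρ (deriv ρ r) r := fun r hr =>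
    ((hρ r hr).differentiableAt (by norm_num)).hasDerivAt
  have hρd1 : ∀ r ∈ Ioi (0:ℝ), HasDerivAt (deriv ρ) (deriv (deriv ρ) r) r := fun r hr =>
    (((hCO1.contDiffAt (isOpen_Ioi.mem_nhds hr))).differentiableAt (by norm_num)).hasDerivAt
  constructor
  · -- forward direction
    intro hode
    -- smooth representative of F on Ioi 0
    have hFnCO : ContDiffOn ℝ 2
        (fun x => deriv (deriv ρ) x + ((m : ℝ) - 1) * deriv ρ x / x - 2 * k * ρ x / x ^ 2)
        (Ioi 0) := by
      refine ContDiffOn.sub (ContDiffOn.add hCO2 ?_) ?_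
      · exact (contDiffOn_const.mul (hCO1.of_le (by norm_num))).div contDiffOn_id
          (fun x hx => ne_of_gt hx)
      · exact (contDiffOn_const.mul (hCO.of_le (by norm_num))).div (contDiffOn_id.pow 2)
          (fun x hx => pow_ne_zero _ (ne_of_gt hx))
    have hFev : ∀ r ∈ Ioi (0:ℝ), F =ᶠ[nhds r]
        (fun x => deriv (deriv ρ) x + ((m : ℝ) - 1) * deriv ρ x / x - 2 * k * ρ x / x ^ 2) :=
      fun r hr => eventuallyEq_of_mem (isOpen_Ioi.mem_nhds hr) (fun x hx => hF x hx)
    have hdF : ∀ r ∈ Ioi (0:ℝ), HasDerivAt F (deriv F r) r := by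
      intro r hr
      have h1 : DifferentiableAt ℝ
          (fun x => deriv (deriv ρ) x + ((m : ℝ) - 1) * deriv ρ x / x - 2 * k * ρ x / x ^ 2) r :=
        ((hFnCO.contDiffAt (isOpen_Ioi.mem_nhds hr))).differentiableAt (by norm_num)
      exact ((hFev r hr).differentiableAt_iff.mpr h1).hasDerivAt
    have hFnCO1 : ContDiffOn ℝ 1
        (deriv (fun x => deriv (deriv ρ) x + ((m : ℝ) - 1) * deriv ρ x / x - 2 * k * ρ x / x ^ 2))
        (Ioi 0) := hFnCO.deriv_of_isOpen isOpen_Ioi (by norm_num)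
    have hdF2 : ∀ r ∈ Ioi (0:ℝ), HasDerivAt (deriv F) (deriv (deriv F) r) r := by
      intro r hr
      have h1 : DifferentiableAt ℝ
          (deriv (fun x => deriv (deriv ρ) x + ((m : ℝ) - 1) * deriv ρ x / x
            - 2 * k * ρ x / x ^ 2)) r :=
        ((hFnCO1.contDiffAt (isOpen_Ioi.mem_nhds hr))).differentiableAt (by norm_num)
      have hev2 : deriv F =ᶠ[nhds r]
          (deriv (fun x => deriv (deriv ρ) x + ((m : ℝ) - 1) * deriv ρ x / x
            - 2 * k * ρ x / x ^ 2)) := by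
        refine eventuallyEq_of_mem (isOpen_Ioi.mem_nhds hr) (fun x hx => ?_)
        exact (hFev x hx).deriv_eq
      exact (hev2.differentiableAt_iff.mpr h1).hasDerivAt
    -- step 1: u := r F' - k₂ F satisfies r u' - k₁ u = 0
    obtain ⟨C₁, hC₁⟩ := solve1 k₁ (fun x => x * deriv F x - k₂ * F x)
      (fun x => deriv F x + x * deriv (deriv F) x - k₂ * deriv F x)
      (fun _ => 0) (fun _ => 0)
      (by
        intro r hr
        have h2 := ((hasDerivAt_id r).mul (hdF2 r hr)).sub ((hdF r hr).const_mul k₂)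
        convert h2 using 1
        · rfl
        · rfl
        · rfl
        simp only [id_eq]
        ring)
      (by
        intro r hr
        simpa using hasDerivAt_const r (0:ℝ))
      (by
        intro r hr
        have hr' : (0:ℝ) < r := hr
        have expand : r ^ 2 * (deriv (deriv F) r + ((m : ℝ) - 1) * deriv F r / r
            - 2 * k * F r / r ^ 2)
            = r ^ 2 * deriv (deriv F) r + ((m : ℝ) - 1) * (r * deriv F r) - 2 * k * F r := by
          field_simp
        have hode2 : r ^ 2 * deriv (deriv F) r + ((m : ℝ) - 1) * (r * deriv F r) - 2 * k * F r
            = 0 := by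
          rw [← expand, hode r hr', mul_zero]
        show r * (deriv F r + r * deriv (deriv F) r - k₂ * deriv F r)
            - k₁ * (r * deriv F r - k₂ * F r) = 0
        linear_combination hode2 - (r * deriv F r) * hsum + (F r) * hprod)
    -- step 2: F r = a r^{k₁} + b r^{k₂}
    obtain ⟨b, hb⟩ := solve1 k₂ F (fun x => deriv F x)
      (fun x => C₁ * x ^ k₁) (fun x => C₁ / (k₁ - k₂) * x ^ (k₁ - k₂))
      hdF
      (by
        intro r hr
        have h0 := hasDerivAt_term (C₁ / (k₁ - k₂)) (k₁ - k₂) (k₁ - k₂ - 1) rfl hr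
        convert h0 using 1
        beta_reduce
        have hx : r ^ k₁ * r ^ (-k₂ - 1) = r ^ (k₁ - k₂ - 1) :=
          rpow_mul_rpow hr _ _ _ (by ring)
        rw [div_mul_cancel₀ C₁ hne]
        linear_combination C₁ * hx)
      (by
        intro r hr
        have h : r * deriv F r - k₂ * F r = (0 + C₁) * r ^ k₁ := hC₁ r hr
        show r * deriv F r - k₂ * F r = C₁ * r ^ k₁
        linear_combination h)
    have hFform : ∀ r ∈ Ioi (0:ℝ), F r = C₁ / (k₁ - k₂) * r ^ k₁ + b * r ^ k₂ := by
      intro r hr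
      have h : F r = (C₁ / (k₁ - k₂) * r ^ (k₁ - k₂) + b) * r ^ k₂ := hb r hr
      have hx : r ^ (k₁ - k₂) * r ^ k₂ = r ^ k₁ := rpow_mul_rpow hr _ _ _ (by ring)
      rw [h]
      linear_combination (C₁ / (k₁ - k₂)) * hx
    -- abstract constants to avoid division juggling
    obtain ⟨A, hA⟩ : ∃ A : ℝ, C₁ / (k₁ - k₂) = 2 * (k₁ - k₂ + 2) * A :=
      ⟨C₁ / (k₁ - k₂) / (2 * (k₁ - k₂ + 2)), by field_simp⟩
    obtain ⟨B, hB⟩ : ∃ B : ℝ, b = 2 * (k₂ - k₁ + 2) * B :=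
      ⟨b / (2 * (k₂ - k₁ + 2)), by field_simp⟩
    -- step 3: v := r ρ' - k₂ ρ
    obtain ⟨C₂, hC₂⟩ := solve1 k₁ (fun x => x * deriv ρ x - k₂ * ρ x)
      (fun x => deriv ρ x + x * deriv (deriv ρ) x - k₂ * deriv ρ x)
      (fun x => C₁ / (k₁ - k₂) * x ^ (k₁ + 2) + b * x ^ (k₂ + 2))
      (fun x => (k₁ - k₂ + 2) * A * x ^ (((2:ℕ)):ℝ) + 2 * B * x ^ (k₂ - k₁ + 2))
      (by
        intro r hr
        have h2 := ((hasDerivAt_id r).mul (hρd1 r hr)).sub ((hρd r hr).const_mul k₂)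
        convert h2 using 1
        · rfl
        · rfl
        · rfl
        simp only [id_eq]
        ring)
      (by
        intro r hr
        have h1 := hasDerivAt_term ((k₁ - k₂ + 2) * A) (((2:ℕ)):ℝ) ((((2:ℕ)):ℝ) - 1) rfl hr
        have h2 := hasDerivAt_term (2 * B) (k₂ - k₁ + 2) (k₂ - k₁ + 2 - 1) rfl hr
        convert h1.add h2 using 1
        · rfl
        · rfl
        · rfl
        beta_reduce
        have f1 : r ^ (k₁ + 2) * r ^ (-k₁ - 1) = r := by
          rw [rpow_mul_rpow hr (k₁ + 2) (-k₁ - 1) 1 (by ring), Real.rpow_one]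
        have f2 : r ^ (k₂ + 2) * r ^ (-k₁ - 1) = r ^ (k₂ - k₁ + 2 - 1) :=
          rpow_mul_rpow hr _ _ _ (by ring)
        have f4 : r ^ ((((2:ℕ)):ℝ) - 1) = r := by
          norm_num
        rw [f4]
        push_cast
        linear_combination (C₁ / (k₁ - k₂)) * f1 + b * f2 + r * hA
          + r ^ (k₂ - k₁ + 2 - 1) * hB)
      (by
        intro r hr
        have hr' : (0:ℝ) < r := hr
        have expand : r ^ 2 * (deriv (deriv ρ) r + ((m : ℝ) - 1) * deriv ρ r / r
            - 2 * k * ρ r / r ^ 2)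
            = r ^ 2 * deriv (deriv ρ) r + ((m : ℝ) - 1) * (r * deriv ρ r) - 2 * k * ρ r := by
          field_simp
        have comb : deriv (deriv ρ) r + ((m : ℝ) - 1) * deriv ρ r / r - 2 * k * ρ r / r ^ 2
            = C₁ / (k₁ - k₂) * r ^ k₁ + b * r ^ k₂ := by
          rw [← hF r hr']; exact hFform r hr
        have key : r ^ 2 * deriv (deriv ρ) r + ((m : ℝ) - 1) * (r * deriv ρ r) - 2 * k * ρ r
            = r ^ 2 * (C₁ / (k₁ - k₂) * r ^ k₁ + b * r ^ k₂) := by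
          rw [← expand, comb]
        have hx1 : r ^ k₁ * r ^ (2:ℕ) = r ^ (k₁ + 2) := rpow_mul_sq hr' _ _ rfl
        have hx2 : r ^ k₂ * r ^ (2:ℕ) = r ^ (k₂ + 2) := rpow_mul_sq hr' _ _ rfl
        show r * (deriv ρ r + r * deriv (deriv ρ) r - k₂ * deriv ρ r)
            - k₁ * (r * deriv ρ r - k₂ * ρ r)
            = C₁ / (k₁ - k₂) * r ^ (k₁ + 2) + b * r ^ (k₂ + 2)
        linear_combination key - (r * deriv ρ r) * hsum + (ρ r) * hprod
          + (C₁ / (k₁ - k₂)) * hx1 + b * hx2)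
    -- step 4: solve for ρ
    obtain ⟨C, hC⟩ : ∃ C : ℝ, C₂ = (k₁ - k₂) * C := ⟨C₂ / (k₁ - k₂), by field_simp⟩
    obtain ⟨C₃, hC₃⟩ := solve1 k₂ ρ (fun x => deriv ρ x)
      (fun x => (k₁ - k₂ + 2) * A * x ^ (k₁ + 2) + 2 * B * x ^ (k₂ + 2) + C₂ * x ^ k₁)
      (fun x => A * x ^ (k₁ - k₂ + 2) + B * x ^ (((2:ℕ)):ℝ) + C * x ^ (k₁ - k₂))
      hρd
      (by
        intro r hr
        have h1 := hasDerivAt_term A (k₁ - k₂ + 2) (k₁ - k₂ + 2 - 1) rfl hr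
        have h2 := hasDerivAt_term B (((2:ℕ)):ℝ) ((((2:ℕ)):ℝ) - 1) rfl hr
        have h3 := hasDerivAt_term C (k₁ - k₂) (k₁ - k₂ - 1) rfl hr
        convert (h1.add h2).add h3 using 1
        · rfl
        · rfl
        · rfl
        beta_reduce
        have f1 : r ^ (k₁ + 2) * r ^ (-k₂ - 1) = r ^ (k₁ - k₂ + 2 - 1) :=
          rpow_mul_rpow hr _ _ _ (by ring)
        have f2 : r ^ (k₂ + 2) * r ^ (-k₂ - 1) = r := by
          rw [rpow_mul_rpow hr (k₂ + 2) (-k₂ - 1) 1 (by ring), Real.rpow_one]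
        have f3 : r ^ k₁ * r ^ (-k₂ - 1) = r ^ (k₁ - k₂ - 1) := rpow_mul_rpow hr _ _ _ (by ring)
        have f4 : r ^ ((((2:ℕ)):ℝ) - 1) = r := by norm_num
        rw [f4]
        push_cast
        linear_combination ((k₁ - k₂ + 2) * A) * f1 + (2 * B) * f2 + C₂ * f3
          + r ^ (k₁ - k₂ - 1) * hC)
      (by
        intro r hr
        have h : r * deriv ρ r - k₂ * ρ r
            = ((k₁ - k₂ + 2) * A * r ^ (((2:ℕ)):ℝ) + 2 * B * r ^ (k₂ - k₁ + 2) + C₂) * r ^ k₁ :=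
          hC₂ r hr
        have f1 : r ^ (((2:ℕ)):ℝ) * r ^ k₁ = r ^ (k₁ + 2) :=
          rpow_mul_rpow hr _ _ _ (by push_cast; ring)
        have f2 : r ^ (k₂ - k₁ + 2) * r ^ k₁ = r ^ (k₂ + 2) := rpow_mul_rpow hr _ _ _ (by ring)
        show r * deriv ρ r - k₂ * ρ r
            = (k₁ - k₂ + 2) * A * r ^ (k₁ + 2) + 2 * B * r ^ (k₂ + 2) + C₂ * r ^ k₁
        linear_combination h + ((k₁ - k₂ + 2) * A) * f1 + (2 * B) * f2)
    -- assemble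
    refine ⟨2 * (k₁ - k₂ + 2) * A, 2 * (k₂ - k₁ + 2) * B, C, C₃, fun r hr => ?_⟩
    have hr' : r ∈ Ioi (0:ℝ) := hr
    have h : ρ r = (A * r ^ (k₁ - k₂ + 2) + B * r ^ (((2:ℕ)):ℝ) + C * r ^ (k₁ - k₂) + C₃)
        * r ^ k₂ := hC₃ r hr'
    have f1 : r ^ (k₁ - k₂ + 2) * r ^ k₂ = r ^ (k₁ + 2) := rpow_mul_rpow hr _ _ _ (by ring)
    have f2 : r ^ (((2:ℕ)):ℝ) * r ^ k₂ = r ^ (k₂ + 2) :=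
      rpow_mul_rpow hr _ _ _ (by push_cast; ring)
    have f3 : r ^ (k₁ - k₂) * r ^ k₂ = r ^ k₁ := rpow_mul_rpow hr _ _ _ (by ring)
    have s1 : 2 * (k₁ - k₂ + 2) * A / (2 * ((m : ℝ) + 2 * k₁)) = A := by
      rw [hm1]; field_simp
    have s2 : 2 * (k₂ - k₁ + 2) * B / (2 * ((m : ℝ) + 2 * k₂)) = B := by
      rw [hm2]; field_simp
    rw [s1, s2, h]
    linear_combination A * f1 + B * f2 + C * f3
  · -- backward direction
    rintro ⟨c₁, c₂, c₃, c₄, hch⟩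
    set a₁ := c₁ / (2 * ((m : ℝ) + 2 * k₁)) with ha₁
    set a₂ := c₂ / (2 * ((m : ℝ) + 2 * k₂)) with ha₂
    have s1 : a₁ * (2 * ((m : ℝ) + 2 * k₁)) = c₁ := by
      rw [ha₁]; exact div_mul_cancel₀ c₁ (mul_ne_zero two_ne_zero hm1ne)
    have s2 : a₂ * (2 * ((m : ℝ) + 2 * k₂)) = c₂ := by
      rw [ha₂]; exact div_mul_cancel₀ c₂ (mul_ne_zero two_ne_zero hm2ne)
    have hΦd : ∀ x ∈ Ioi (0:ℝ), HasDerivAt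
        (fun y : ℝ => a₁ * y ^ (k₁ + 2) + a₂ * y ^ (k₂ + 2) + c₃ * y ^ k₁ + c₄ * y ^ k₂)
        (a₁ * (k₁ + 2) * x ^ (k₁ + 1) + a₂ * (k₂ + 2) * x ^ (k₂ + 1)
          + c₃ * k₁ * x ^ (k₁ - 1) + c₄ * k₂ * x ^ (k₂ - 1)) x := fun x hx =>
      (((hasDerivAt_term a₁ (k₁ + 2) (k₁ + 1) (by ring) hx).add
        (hasDerivAt_term a₂ (k₂ + 2) (k₂ + 1) (by ring) hx)).add
        (hasDerivAt_term c₃ k₁ (k₁ - 1) rfl hx)).add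
        (hasDerivAt_term c₄ k₂ (k₂ - 1) rfl hx)
    have hd1 : ∀ x ∈ Ioi (0:ℝ), deriv ρ x
        = a₁ * (k₁ + 2) * x ^ (k₁ + 1) + a₂ * (k₂ + 2) * x ^ (k₂ + 1)
          + c₃ * k₁ * x ^ (k₁ - 1) + c₄ * k₂ * x ^ (k₂ - 1) := by
      intro x hx
      have hev : ρ =ᶠ[nhds x]
          (fun y : ℝ => a₁ * y ^ (k₁ + 2) + a₂ * y ^ (k₂ + 2) + c₃ * y ^ k₁ + c₄ * y ^ k₂) :=
        eventuallyEq_of_mem (isOpen_Ioi.mem_nhds hx) (fun y hy => hch y hy)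
      rw [hev.deriv_eq]
      exact (hΦd x hx).deriv
    have hΦ1d : ∀ x ∈ Ioi (0:ℝ), HasDerivAt
        (fun y : ℝ => a₁ * (k₁ + 2) * y ^ (k₁ + 1) + a₂ * (k₂ + 2) * y ^ (k₂ + 1)
          + c₃ * k₁ * y ^ (k₁ - 1) + c₄ * k₂ * y ^ (k₂ - 1))
        (a₁ * (k₁ + 2) * (k₁ + 1) * x ^ k₁ + a₂ * (k₂ + 2) * (k₂ + 1) * x ^ k₂
          + c₃ * k₁ * (k₁ - 1) * x ^ (k₁ - 2) + c₄ * k₂ * (k₂ - 1) * x ^ (k₂ - 2)) x :=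
      fun x hx =>
      (((hasDerivAt_term (a₁ * (k₁ + 2)) (k₁ + 1) k₁ (by ring) hx).add
        (hasDerivAt_term (a₂ * (k₂ + 2)) (k₂ + 1) k₂ (by ring) hx)).add
        (hasDerivAt_term (c₃ * k₁) (k₁ - 1) (k₁ - 2) (by ring) hx)).add
        (hasDerivAt_term (c₄ * k₂) (k₂ - 1) (k₂ - 2) (by ring) hx)
    have hd2 : ∀ x ∈ Ioi (0:ℝ), deriv (deriv ρ) x
        = a₁ * (k₁ + 2) * (k₁ + 1) * x ^ k₁ + a₂ * (k₂ + 2) * (k₂ + 1) * x ^ k₂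
          + c₃ * k₁ * (k₁ - 1) * x ^ (k₁ - 2) + c₄ * k₂ * (k₂ - 1) * x ^ (k₂ - 2) := by
      intro x hx
      have hev : deriv ρ =ᶠ[nhds x]
          (fun y : ℝ => a₁ * (k₁ + 2) * y ^ (k₁ + 1) + a₂ * (k₂ + 2) * y ^ (k₂ + 1)
            + c₃ * k₁ * y ^ (k₁ - 1) + c₄ * k₂ * y ^ (k₂ - 1)) :=
        eventuallyEq_of_mem (isOpen_Ioi.mem_nhds hx) (fun y hy => hd1 y hy)
      rw [hev.deriv_eq]
      exact (hΦ1d x hx).deriv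
    have hFval : ∀ x ∈ Ioi (0:ℝ), F x = c₁ * x ^ k₁ + c₂ * x ^ k₂ := by
      intro x hx
      have hx' : (0:ℝ) < x := hx
      rw [hF x hx', hd2 x hx, hd1 x hx, hch x hx']
      have e1 := L_rpow (m : ℝ) k (k₁ + 2) (2 * ((m : ℝ) + 2 * k₁)) (k₁ + 1) k₁ hx'
        (by ring) (by ring) (by linear_combination q₁)
      have e2 := L_rpow (m : ℝ) k (k₂ + 2) (2 * ((m : ℝ) + 2 * k₂)) (k₂ + 1) k₂ hx'
        (by ring) (by ring) (by linear_combination q₂)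
      have e3 := L_rpow (m : ℝ) k k₁ 0 (k₁ - 1) (k₁ - 2) hx' rfl rfl (by linear_combination q₁)
      have e4 := L_rpow (m : ℝ) k k₂ 0 (k₂ - 1) (k₂ - 2) hx' rfl rfl (by linear_combination q₂)
      linear_combination a₁ * e1 + a₂ * e2 + c₃ * e3 + c₄ * e4
        + x ^ k₁ * s1 + x ^ k₂ * s2
    intro r hr
    have hr' : r ∈ Ioi (0:ℝ) := hr
    have hΨd : ∀ x ∈ Ioi (0:ℝ), HasDerivAt (fun y : ℝ => c₁ * y ^ k₁ + c₂ * y ^ k₂)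
        (c₁ * k₁ * x ^ (k₁ - 1) + c₂ * k₂ * x ^ (k₂ - 1)) x := fun x hx =>
      (hasDerivAt_term c₁ k₁ (k₁ - 1) rfl hx).add (hasDerivAt_term c₂ k₂ (k₂ - 1) rfl hx)
    have hdF1 : ∀ x ∈ Ioi (0:ℝ), deriv F x
        = c₁ * k₁ * x ^ (k₁ - 1) + c₂ * k₂ * x ^ (k₂ - 1) := by
      intro x hx
      have hev : F =ᶠ[nhds x] (fun y : ℝ => c₁ * y ^ k₁ + c₂ * y ^ k₂) :=
        eventuallyEq_of_mem (isOpen_Ioi.mem_nhds hx) (fun y hy => hFval y hy)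
      rw [hev.deriv_eq]
      exact (hΨd x hx).deriv
    have hdF2' : deriv (deriv F) r
        = c₁ * k₁ * (k₁ - 1) * r ^ (k₁ - 2) + c₂ * k₂ * (k₂ - 1) * r ^ (k₂ - 2) := by
      have hev : deriv F =ᶠ[nhds r]
          (fun y : ℝ => c₁ * k₁ * y ^ (k₁ - 1) + c₂ * k₂ * y ^ (k₂ - 1)) :=
        eventuallyEq_of_mem (isOpen_Ioi.mem_nhds hr') (fun y hy => hdF1 y hy)
      rw [hev.deriv_eq]
      exact ((hasDerivAt_term (c₁ * k₁) (k₁ - 1) (k₁ - 2) (by ring) hr).add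
        (hasDerivAt_term (c₂ * k₂) (k₂ - 1) (k₂ - 2) (by ring) hr)).deriv
    rw [hdF2', hdF1 r hr', hFval r hr']
    have e3 := L_rpow (m : ℝ) k k₁ 0 (k₁ - 1) (k₁ - 2) hr rfl rfl (by linear_combination q₁)
    have e4 := L_rpow (m : ℝ) k k₂ 0 (k₂ - 1) (k₂ - 2) hr rfl rfl (by linear_combination q₂)
    linear_combination c₁ * e3 + c₂ * e4
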